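/- Let q = (2e+1)·t with integers e ≥ 0 and t ≥ 2, and set d1 = gcd(2e+1, t) and h1 = (2e+1)/d1. For every integer k, the additive subgroup of Z_q^2 generated by (2e+1 mod q, k·h1 mod q) and (0, 2e+1 mod q) is a perfect e-code of type 2. Conversely, every additive subgroup C of Z_q^2 that is a perfect e-code of type 2 equals the additive subgroup generated by (2e+1 mod q, k·h1 mod q) and (0, 2e+1 mod q) for some integer k. -/

import Mathlib

/-- Lee distance on `ZMod q`. -/
def leeDist {q : ℕ} (x y : ZMod q) : ℕ := min (x - y).val (q - (x - y).val)

/-- Maximum (Chebyshev) distance on `(ZMod q)^n`. -/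
def maxDist {q n : ℕ} (x y : Fin n → ZMod q) : ℕ :=
  Finset.univ.sup fun i => leeDist (x i) (y i)

/-- `C` is a perfect `e`-code: every point is within distance `e` of exactly one codeword. -/
def IsPerfectCode {q n : ℕ} (e : ℕ) (C : Set (Fin n → ZMod q)) : Prop :=
  ∀ x : Fin n → ZMod q, ∃! c, c ∈ C ∧ maxDist x c ≤ e

/-- `C ⊆ (ZMod q)^n` is a code of type `i`: translation by `(2e+1)·e_i` preserves `C`. -/
def IsTypeCode {q n : ℕ} (e : ℕ) (C : Set (Fin n → ZMod q)) (i : Fin n) : Prop :=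
  ∀ c ∈ C, c + Pi.single i ((2 * e + 1 : ℕ) : ZMod q) ∈ C

/-- `LC_q(e,k)`: the additive subgroup of `(ZMod q)^2` generated by
`(2e+1, k·h1)` and `(0, 2e+1)`, where `h1 = (2e+1)/gcd(2e+1,t)`. -/
def LCcode (q e t : ℕ) (k : ℤ) : AddSubgroup (Fin 2 → ZMod q) :=
  AddSubgroup.closure
    { ![((2 * e + 1 : ℕ) : ZMod q),
        ((k * (((2 * e + 1) / Nat.gcd (2 * e + 1) t : ℕ) : ℤ) : ℤ) : ZMod q)],
      ![(0 : ZMod q), ((2 * e + 1 : ℕ) : ZMod q)] }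

section helpers

variable {q : ℕ} [NeZero q]

lemma leeDist_eq (x y : ZMod q) : leeDist x y = (x - y).valMinAbs.natAbs := by
  rw [ZMod.valMinAbs_natAbs_eq_min]; rfl

omit [NeZero q] in
lemma leeDist_sub_congr {x y x' y' : ZMod q} (h : x - y = x' - y') :
    leeDist x y = leeDist x' y' := by
  unfold leeDist; rw [h]

lemma leeDist_comm (x y : ZMod q) : leeDist x y = leeDist y x := by
  rw [leeDist_eq, leeDist_eq, ← ZMod.natAbs_valMinAbs_neg, neg_sub]

lemma leeDist_le_natAbs {x y : ZMod q} {z : ℤ} (h : (z : ZMod q) = x - y) :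
    leeDist x y ≤ z.natAbs := by
  rw [leeDist_eq]
  apply ZMod.natAbs_min_of_le_div_two q
  · rw [ZMod.coe_valMinAbs, h]
  · apply ZMod.natAbs_valMinAbs_le

lemma leeDist_triangle (x y z : ZMod q) :
    leeDist x z ≤ leeDist x y + leeDist y z := by
  have h : (((x - y).valMinAbs + (y - z).valMinAbs : ℤ) : ZMod q) = x - z := by
    push_cast [ZMod.coe_valMinAbs]; ring
  calc leeDist x z ≤ ((x - y).valMinAbs + (y - z).valMinAbs).natAbs := leeDist_le_natAbs h
    _ ≤ (x - y).valMinAbs.natAbs + (y - z).valMinAbs.natAbs := Int.natAbs_add_le _ _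
    _ = _ := by rw [leeDist_eq, leeDist_eq]

lemma leeDist_valMinAbs (x : ZMod q) : leeDist x 0 = x.valMinAbs.natAbs := by
  rw [leeDist_eq, sub_zero]

omit [NeZero q] in
lemma nat_aux {m v q : ℕ} (hm : 0 < m) (h1 : m ∣ v) (h2 : m ∣ q) (hlt : v < q)
    (hmin : min v (q - v) < m) : v = 0 := by
  obtain ⟨j, rfl⟩ := h1; obtain ⟨s, rfl⟩ := h2
  rcases Nat.eq_zero_or_pos j with rfl | hj
  · simp
  have hjs : j < s := Nat.lt_of_mul_lt_mul_left hlt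
  have h3 : m * 1 ≤ m * j := Nat.mul_le_mul_left m hj
  have h4 : m * (j + 1) ≤ m * s := Nat.mul_le_mul_left m hjs
  rw [Nat.mul_add] at h4
  omega

/-- L1: a multiple of `2e+1` in `ZMod q` with Lee weight `≤ 2e` is zero. -/
lemma mult_small {e t : ℕ} (hq : q = (2 * e + 1) * t) {z : ZMod q}
    (hz : ∃ a : ℤ, ((a * ((2 * e + 1 : ℕ) : ℤ) : ℤ) : ZMod q) = z)
    (hle : leeDist z 0 ≤ 2 * e) : z = 0 := by
  obtain ⟨a, ha⟩ := hz
  have hcast : (((z.val : ℤ) - a * ((2 * e + 1 : ℕ) : ℤ) : ℤ) : ZMod q) = 0 := by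
    push_cast [ZMod.natCast_zmod_val, ← ha]
    ring
  rw [ZMod.intCast_zmod_eq_zero_iff_dvd] at hcast
  have hmq : (((2 * e + 1 : ℕ) : ℤ)) ∣ (q : ℤ) := by
    exact_mod_cast Int.natCast_dvd_natCast.mpr ⟨t, hq⟩
  have hmz : (((2 * e + 1 : ℕ) : ℤ)) ∣ (z.val : ℤ) := by
    have h1 : (((2 * e + 1 : ℕ) : ℤ)) ∣ ((z.val : ℤ) - a * ((2 * e + 1 : ℕ) : ℤ)) :=
      hmq.trans hcast
    have h2 : (((2 * e + 1 : ℕ) : ℤ)) ∣ a * ((2 * e + 1 : ℕ) : ℤ) := Dvd.intro_left a rfl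
    have := dvd_add h1 h2
    simpa using this
  have hmz' : (2 * e + 1) ∣ z.val := by exact_mod_cast hmz
  have hmq' : (2 * e + 1) ∣ q := ⟨t, hq⟩
  have hlt : z.val < q := ZMod.val_lt z
  have hlee : leeDist z 0 = min z.val (q - z.val) := by
    unfold leeDist; rw [sub_zero]
  have hv : z.val = 0 := by
    refine nat_aux (by omega) hmz' hmq' hlt ?_
    rw [hlee] at hle; omega
  exact (ZMod.val_eq_zero z).mp hv

/-- L2: every element is within Lee distance `e` of a multiple of `2e+1`. -/
lemma exists_near (e : ℕ) (x : ZMod q) :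
    ∃ b : ℤ, leeDist x ((b * ((2 * e + 1 : ℕ) : ℤ) : ℤ) : ZMod q) ≤ e := by
  set m := 2 * e + 1 with hm
  refine ⟨((x.val + e) / m : ℕ), ?_⟩
  have hdm : m * ((x.val + e) / m) + (x.val + e) % m = x.val + e := Nat.div_add_mod _ _
  have hrm : (x.val + e) % m < m := Nat.mod_lt _ (by omega)
  refine le_trans (leeDist_le_natAbs (z := ((x.val + e) % m : ℕ) - (e : ℤ)) ?_) ?_
  · have h1 : (((x.val + e) % m : ℕ) : ℤ) - (e : ℤ)
        = (x.val : ℤ) - ((x.val + e) / m : ℕ) * ((m : ℕ) : ℤ) := by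
      have := congrArg (fun n : ℕ => (n : ℤ)) hdm
      push_cast at this ⊢
      linarith
    rw [h1]
    push_cast [ZMod.natCast_zmod_val]
    ring
  · omega
end helpers

lemma maxDist_le_iff {q e : ℕ} {x y : Fin 2 → ZMod q} :
    maxDist x y ≤ e ↔ leeDist (x 0) (y 0) ≤ e ∧ leeDist (x 1) (y 1) ≤ e := by
  unfold maxDist
  rw [Finset.sup_le_iff]
  constructor
  · intro h; exact ⟨h 0 (Finset.mem_univ _), h 1 (Finset.mem_univ _)⟩
  · rintro ⟨h0, h1⟩ i -
    fin_cases i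
    · exact h0
    · exact h1

lemma single_eq {q : ℕ} (v : ZMod q) : Pi.single (1 : Fin 2) v = ![0, v] := by
  funext i
  fin_cases i
  · simp [Pi.single_eq_of_ne]
  · simp

lemma th1_eq (e t : ℕ) :
    t * ((2 * e + 1) / Nat.gcd (2 * e + 1) t) = (2 * e + 1) * (t / Nat.gcd (2 * e + 1) t) := by
  rw [← Nat.mul_div_assoc t (Nat.gcd_dvd_left _ _), ← Nat.mul_div_assoc _ (Nat.gcd_dvd_right _ _),
    mul_comm t (2 * e + 1)]

lemma part1 {q e t : ℕ} [NeZero q] (hq : q = (2 * e + 1) * t) (k : ℤ) :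
    IsPerfectCode e (LCcode q e t k : Set (Fin 2 → ZMod q)) ∧
      IsTypeCode e (LCcode q e t k : Set (Fin 2 → ZMod q)) 1 := by
  set M : ZMod q := ((2 * e + 1 : ℕ) : ZMod q) with hM
  set h1 : ℕ := (2 * e + 1) / Nat.gcd (2 * e + 1) t with hh1
  set K : ZMod q := ((k * (h1 : ℤ) : ℤ) : ZMod q) with hK
  have hmem : ∀ z : Fin 2 → ZMod q, z ∈ LCcode q e t k ↔
      ∃ a b : ℤ, a • ![M, K] + b • ![(0 : ZMod q), M] = z := by
    intro z
    exact AddSubgroup.mem_closure_pair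
  have hc0 : ∀ a b : ℤ, (a • ![M, K] + b • ![(0 : ZMod q), M]) 0
      = ((a * ((2 * e + 1 : ℕ) : ℤ) : ℤ) : ZMod q) := by
    intro a b
    simp only [Pi.add_apply, Pi.smul_apply, Matrix.cons_val_zero, smul_zero, add_zero]
    rw [zsmul_eq_mul, hM]
    push_cast
    ring
  have hc1 : ∀ a b : ℤ, (a • ![M, K] + b • ![(0 : ZMod q), M]) 1
      = ((a * (k * (h1 : ℤ)) + b * ((2 * e + 1 : ℕ) : ℤ) : ℤ) : ZMod q) := by
    intro a b
    simp only [Pi.add_apply, Pi.smul_apply, Matrix.cons_val_one, Matrix.head_cons]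
    rw [zsmul_eq_mul, zsmul_eq_mul, hK, hM]
    push_cast
    ring
  constructor
  · -- perfect code
    intro x
    obtain ⟨a, ha⟩ := exists_near (q := q) e (x 0)
    obtain ⟨b, hb⟩ := exists_near (q := q) e (x 1 - ((a * (k * (h1 : ℤ)) : ℤ) : ZMod q))
    have hcmem : a • ![M, K] + b • ![(0 : ZMod q), M] ∈ LCcode q e t k :=
      (hmem _).mpr ⟨a, b, rfl⟩
    have hcdist : maxDist x (a • ![M, K] + b • ![(0 : ZMod q), M]) ≤ e := by
      rw [maxDist_le_iff]
      constructor
      · rw [hc0]; exact ha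
      · rw [hc1]
        rw [leeDist_sub_congr (x' := x 1 - ((a * (k * (h1 : ℤ)) : ℤ) : ZMod q))
          (y' := ((b * ((2 * e + 1 : ℕ) : ℤ) : ℤ) : ZMod q)) (by push_cast; ring)]
        exact hb
    have huniq : ∀ y1 y2 : Fin 2 → ZMod q, y1 ∈ LCcode q e t k → y2 ∈ LCcode q e t k →
        maxDist x y1 ≤ e → maxDist x y2 ≤ e → y1 = y2 := by
      intro y1 y2 hy1 hy2 hd1 hd2
      obtain ⟨a1, b1, rfl⟩ := (hmem y1).mp hy1
      obtain ⟨a2, b2, rfl⟩ := (hmem y2).mp hy2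
      rw [maxDist_le_iff] at hd1 hd2
      have tri0 : leeDist ((a1 • ![M, K] + b1 • ![(0 : ZMod q), M]) 0)
          ((a2 • ![M, K] + b2 • ![(0 : ZMod q), M]) 0) ≤ 2 * e := by
        have h := leeDist_triangle ((a1 • ![M, K] + b1 • ![(0 : ZMod q), M]) 0) (x 0)
          ((a2 • ![M, K] + b2 • ![(0 : ZMod q), M]) 0)
        rw [leeDist_comm ((a1 • ![M, K] + b1 • ![(0 : ZMod q), M]) 0) (x 0)] at h
        have := hd1.1; have := hd2.1; omega
      have tri1 : leeDist ((a1 • ![M, K] + b1 • ![(0 : ZMod q), M]) 1)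
          ((a2 • ![M, K] + b2 • ![(0 : ZMod q), M]) 1) ≤ 2 * e := by
        have h := leeDist_triangle ((a1 • ![M, K] + b1 • ![(0 : ZMod q), M]) 1) (x 1)
          ((a2 • ![M, K] + b2 • ![(0 : ZMod q), M]) 1)
        rw [leeDist_comm ((a1 • ![M, K] + b1 • ![(0 : ZMod q), M]) 1) (x 1)] at h
        have := hd1.2; have := hd2.2; omega
      have hz0 : (a1 • ![M, K] + b1 • ![(0 : ZMod q), M]) 0
          - (a2 • ![M, K] + b2 • ![(0 : ZMod q), M]) 0 = 0 := by
        apply mult_small hq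
        · exact ⟨a1 - a2, by rw [hc0 a1 b1, hc0 a2 b2]; push_cast; ring⟩
        · rw [leeDist_sub_congr (x' := (a1 • ![M, K] + b1 • ![(0 : ZMod q), M]) 0)
            (y' := (a2 • ![M, K] + b2 • ![(0 : ZMod q), M]) 0) (by rw [sub_zero])]
          exact tri0
      have htu : ∃ u : ℤ, a1 - a2 = t * u := by
        have h0 : (((a1 - a2) * ((2 * e + 1 : ℕ) : ℤ) : ℤ) : ZMod q) = 0 := by
          rw [← hz0, hc0 a1 b1, hc0 a2 b2]; push_cast; ring
        rw [ZMod.intCast_zmod_eq_zero_iff_dvd, hq] at h0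
        obtain ⟨u, hu⟩ := h0
        refine ⟨u, ?_⟩
        have hne : ((2 * e + 1 : ℕ) : ℤ) ≠ 0 := by positivity
        apply mul_right_cancel₀ hne
        rw [hu]; push_cast; ring
      obtain ⟨u, hu⟩ := htu
      have hz1 : (a1 • ![M, K] + b1 • ![(0 : ZMod q), M]) 1
          - (a2 • ![M, K] + b2 • ![(0 : ZMod q), M]) 1 = 0 := by
        apply mult_small hq
        · refine ⟨u * k * ((t / Nat.gcd (2 * e + 1) t : ℕ) : ℤ) + (b1 - b2), ?_⟩
          have hth1 : (t : ℤ) * (h1 : ℤ)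
              = ((2 * e + 1 : ℕ) : ℤ) * ((t / Nat.gcd (2 * e + 1) t : ℕ) : ℤ) := by
            exact_mod_cast th1_eq e t
          have key : (u * k * ((t / Nat.gcd (2 * e + 1) t : ℕ) : ℤ) + (b1 - b2))
                * ((2 * e + 1 : ℕ) : ℤ)
              = (a1 * (k * (h1 : ℤ)) + b1 * ((2 * e + 1 : ℕ) : ℤ))
                - (a2 * (k * (h1 : ℤ)) + b2 * ((2 * e + 1 : ℕ) : ℤ)) := by
            linear_combination (-(k * (h1 : ℤ))) * hu + (-(u * k)) * hth1
          rw [hc1 a1 b1, hc1 a2 b2, ← Int.cast_sub, ← key]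
        · rw [leeDist_sub_congr (x' := (a1 • ![M, K] + b1 • ![(0 : ZMod q), M]) 1)
            (y' := (a2 • ![M, K] + b2 • ![(0 : ZMod q), M]) 1) (by rw [sub_zero])]
          exact tri1
      funext i
      fin_cases i
      · exact sub_eq_zero.mp hz0
      · exact sub_eq_zero.mp hz1
    refine ⟨a • ![M, K] + b • ![(0 : ZMod q), M], ⟨hcmem, hcdist⟩, ?_⟩
    rintro y ⟨hy, hyd⟩
    exact huniq y _ hy hcmem hyd hcdist
  · -- type code
    intro c hc
    rw [single_eq]
    exact AddSubgroup.add_mem _ hc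
      (AddSubgroup.subset_closure (Set.mem_insert_of_mem _ rfl))

lemma gcd_bezout_cast {q : ℕ} [NeZero q] (u : ZMod q) (m : ℕ) :
    ((Nat.gcd u.val m : ℕ) : ZMod q)
      = ((Nat.gcdA u.val m : ℤ) : ZMod q) * u
        + ((Nat.gcdB u.val m : ℤ) : ZMod q) * ((m : ℕ) : ZMod q) := by
  have hbez := Nat.gcd_eq_gcd_ab u.val m
  have : ((Nat.gcd u.val m : ℕ) : ZMod q) = (((Nat.gcd u.val m : ℕ) : ℤ) : ZMod q) := by
    push_cast; rfl
  rw [this, hbez]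
  push_cast [ZMod.natCast_zmod_val]
  ring

lemma part2 {q e t : ℕ} [NeZero q] (ht : 2 ≤ t) (hq : q = (2 * e + 1) * t)
    (C : AddSubgroup (Fin 2 → ZMod q))
    (hP : IsPerfectCode e (C : Set (Fin 2 → ZMod q)))
    (hT : IsTypeCode e (C : Set (Fin 2 → ZMod q)) 1) :
    ∃ k : ℤ, C = LCcode q e t k := by
  set M : ZMod q := ((2 * e + 1 : ℕ) : ZMod q) with hM
  have hmq : 2 * e + 1 ≤ q := by
    have : (2 * e + 1) * 1 ≤ (2 * e + 1) * t := Nat.mul_le_mul_left _ (by omega)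
    omega
  have hq4 : 4 * e + 2 ≤ q := by
    have : (2 * e + 1) * 2 ≤ (2 * e + 1) * t := Nat.mul_le_mul_left _ ht
    omega
  -- (0, M) ∈ C
  have hg2 : ![(0 : ZMod q), M] ∈ C := by
    have h0 := hT 0 (zero_mem C)
    rwa [zero_add, single_eq] at h0
  -- packing
  have hpack : ∀ c ∈ C, leeDist (c 0) 0 ≤ 2 * e → leeDist (c 1) 0 ≤ 2 * e → c = 0 := by
    intro c hc hle0 hle1
    set x : Fin 2 → ZMod q := fun i => (((c i).valMinAbs / 2 : ℤ) : ZMod q) with hx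
    have hxc : ∀ i : Fin 2, leeDist (c i) 0 ≤ 2 * e → leeDist (x i) (c i) ≤ e := by
      intro i hv
      rw [leeDist_valMinAbs] at hv
      refine le_trans (leeDist_le_natAbs (z := (c i).valMinAbs / 2 - (c i).valMinAbs) ?_) ?_
      · push_cast [ZMod.coe_valMinAbs]
        rw [hx]
      · omega
    have hx0 : ∀ i : Fin 2, leeDist (c i) 0 ≤ 2 * e → leeDist (x i) 0 ≤ e := by
      intro i hv
      rw [leeDist_valMinAbs] at hv
      refine le_trans (leeDist_le_natAbs (z := (c i).valMinAbs / 2) ?_) ?_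
      · rw [sub_zero, hx]
      · omega
    obtain ⟨c', -, hcu⟩ := hP x
    have e1 := hcu c ⟨hc, maxDist_le_iff.mpr ⟨hxc 0 hle0, hxc 1 hle1⟩⟩
    have e2 := hcu 0 ⟨zero_mem C, maxDist_le_iff.mpr ⟨hx0 0 hle0, hx0 1 hle1⟩⟩
    rw [e1, e2]
  -- PA : small first coordinate forces it to be zero
  have hPA : ∀ c ∈ C, leeDist (c 0) 0 ≤ 2 * e → c 0 = 0 := by
    intro c hc hle
    obtain ⟨b, hb⟩ := exists_near (q := q) e (c 1)
    have hwC : c - b • ![(0 : ZMod q), M] ∈ C := sub_mem hc (zsmul_mem hg2 b)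
    have hw0 : (c - b • ![(0 : ZMod q), M]) 0 = c 0 := by
      simp [Matrix.cons_val_zero]
    have hw1 : leeDist ((c - b • ![(0 : ZMod q), M]) 1) 0 ≤ 2 * e := by
      have heq : (c - b • ![(0 : ZMod q), M]) 1 - 0
          = c 1 - ((b * ((2 * e + 1 : ℕ) : ℤ) : ℤ) : ZMod q) := by
        simp only [Pi.sub_apply, Pi.smul_apply, Matrix.cons_val_one, Matrix.head_cons, sub_zero]
        rw [zsmul_eq_mul, hM]
        push_cast
        ring
      rw [leeDist_sub_congr heq]
      omega
    have := hpack _ hwC (by rwa [hw0]) hw1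
    have h00 := congrFun this 0
    rw [hw0] at h00
    simpa using h00
  -- D : second coordinate of kernel elements is a multiple of 2e+1
  have hD : ∀ c ∈ C, c 0 = 0 → (2 * e + 1) ∣ (c 1).val := by
    intro c hc hc0
    set g := Nat.gcd (c 1).val (2 * e + 1) with hg
    have hgpos : 0 < g := Nat.gcd_pos_of_pos_right _ (by omega)
    have hgdvd : g ∣ 2 * e + 1 := Nat.gcd_dvd_right _ _
    have hgle : g ≤ 2 * e + 1 := Nat.le_of_dvd (by omega) hgdvd
    set a' := Nat.gcdA (c 1).val (2 * e + 1) with ha'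
    set b' := Nat.gcdB (c 1).val (2 * e + 1) with hb'
    have hwC : a' • c + b' • ![(0 : ZMod q), M] ∈ C := add_mem (zsmul_mem hc a') (zsmul_mem hg2 b')
    have hw0 : (a' • c + b' • ![(0 : ZMod q), M]) 0 = 0 := by
      simp [hc0]
    have hw1 : (a' • c + b' • ![(0 : ZMod q), M]) 1 = ((g : ℕ) : ZMod q) := by
      rw [hg, gcd_bezout_cast (c 1) (2 * e + 1)]
      simp only [Pi.add_apply, Pi.smul_apply, Matrix.cons_val_one, Matrix.head_cons, Matrix.cons_val_zero]
      rw [zsmul_eq_mul, zsmul_eq_mul, hM, ← ha', ← hb']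
    rcases lt_or_ge g (2 * e + 1) with hlt | hge
    · exfalso
      have hgq : g < q := by omega
      have hgval : ((g : ℕ) : ZMod q).val = g := by
        rw [ZMod.val_natCast, Nat.mod_eq_of_lt hgq]
      have hlee : leeDist ((g : ℕ) : ZMod q) 0 ≤ 2 * e := by
        unfold leeDist
        rw [sub_zero, hgval]
        omega
      have hlee0 : leeDist ((a' • c + b' • ![(0 : ZMod q), M]) 0) 0 ≤ 2 * e := by
        rw [hw0]
        unfold leeDist
        simp
      have := hpack _ hwC hlee0 (by rwa [hw1])
      have hzero : ((g : ℕ) : ZMod q) = 0 := by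
        have h11 := congrFun this 1
        rw [hw1] at h11
        simpa using h11
      rw [ZMod.natCast_eq_zero_iff] at hzero
      have := Nat.le_of_dvd hgpos hzero
      omega
    · have hgeq : g = 2 * e + 1 := le_antisymm hgle hge
      rw [← hgeq]
      exact Nat.gcd_dvd_left _ _
  -- B : there is a codeword with first coordinate M
  have hB : ∃ cM ∈ C, cM 0 = M := by
    obtain ⟨c, ⟨hc, hcd⟩, -⟩ := hP ![((e + 1 : ℕ) : ZMod q), 0]
    have h01 : leeDist (((e + 1 : ℕ) : ZMod q)) (c 0) ≤ e := by
      have := (maxDist_le_iff.mp hcd).1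
      simpa using this
    have hvx : (((e + 1 : ℕ) : ZMod q)).val = e + 1 := by
      rw [ZMod.val_natCast, Nat.mod_eq_of_lt (by omega)]
    have hx0lee : leeDist (((e + 1 : ℕ) : ZMod q)) 0 = e + 1 := by
      unfold leeDist
      rw [sub_zero, hvx]
      omega
    have hle : leeDist (c 0) 0 ≤ 2 * e + 1 := by
      have h := leeDist_triangle (c 0) (((e + 1 : ℕ) : ZMod q)) 0
      rw [leeDist_comm (c 0) (((e + 1 : ℕ) : ZMod q))] at h
      omega
    rcases le_or_gt (leeDist (c 0) 0) (2 * e) with hsm | hbig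
    · exfalso
      have hc00 := hPA c hc hsm
      rw [hc00] at h01
      omega
    · have heq : leeDist (c 0) 0 = 2 * e + 1 := by omega
      have hvlt : (c 0).val < q := ZMod.val_lt _
      have hcases : (c 0).val = 2 * e + 1 ∨ (c 0).val = q - (2 * e + 1) := by
        unfold leeDist at heq
        rw [sub_zero] at heq
        omega
      rcases hcases with hv | hv
      · refine ⟨c, hc, ?_⟩
        rw [← ZMod.natCast_zmod_val (c 0), hv, hM]
      · refine ⟨-c, neg_mem hc, ?_⟩
        have : c 0 = ((q - (2 * e + 1) : ℕ) : ZMod q) := by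
          rw [← ZMod.natCast_zmod_val (c 0), hv]
        rw [Pi.neg_apply, this, hM]
        have hcast : ((q - (2 * e + 1) : ℕ) : ZMod q)
            = ((q : ℕ) : ZMod q) - ((2 * e + 1 : ℕ) : ZMod q) := by
          rw [Nat.cast_sub hmq]
        rw [hcast, ZMod.natCast_self, zero_sub, neg_neg]
  obtain ⟨cM, hcM, hcM0⟩ := hB
  -- C1 : first coordinates are multiples of 2e+1
  have hC1 : ∀ c ∈ C, (2 * e + 1) ∣ (c 0).val := by
    intro c hc
    set g := Nat.gcd (c 0).val (2 * e + 1) with hg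
    have hgpos : 0 < g := Nat.gcd_pos_of_pos_right _ (by omega)
    have hgdvd : g ∣ 2 * e + 1 := Nat.gcd_dvd_right _ _
    have hgle : g ≤ 2 * e + 1 := Nat.le_of_dvd (by omega) hgdvd
    set a' := Nat.gcdA (c 0).val (2 * e + 1) with ha'
    set b' := Nat.gcdB (c 0).val (2 * e + 1) with hb'
    have hwC : a' • c + b' • cM ∈ C := add_mem (zsmul_mem hc a') (zsmul_mem hcM b')
    have hw0 : (a' • c + b' • cM) 0 = ((g : ℕ) : ZMod q) := by
      rw [hg, gcd_bezout_cast (c 0) (2 * e + 1)]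
      simp only [Pi.add_apply, Pi.smul_apply]
      rw [zsmul_eq_mul, zsmul_eq_mul, hcM0, hM, ← ha', ← hb']
    rcases lt_or_ge g (2 * e + 1) with hlt | hge
    · exfalso
      have hgq : g < q := by omega
      have hgval : ((g : ℕ) : ZMod q).val = g := by
        rw [ZMod.val_natCast, Nat.mod_eq_of_lt hgq]
      have hlee : leeDist ((a' • c + b' • cM) 0) 0 ≤ 2 * e := by
        rw [hw0]
        unfold leeDist
        rw [sub_zero, hgval]
        omega
      have := hPA _ hwC hlee
      rw [hw0] at this
      rw [ZMod.natCast_eq_zero_iff] at this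
      have := Nat.le_of_dvd hgpos this
      omega
    · have hgeq : g = 2 * e + 1 := le_antisymm hgle hge
      rw [← hgeq]
      exact Nat.gcd_dvd_left _ _
  -- divisibility of the second coordinate of cM
  set s : ZMod q := cM 1 with hs
  have hts : (2 * e + 1) ∣ t * s.val := by
    have htC : t • cM ∈ C := AddSubgroup.nsmul_mem C hcM t
    have h0 : (t • cM) 0 = 0 := by
      rw [Pi.smul_apply, hcM0, nsmul_eq_mul, hM]
      rw [show ((t : ZMod q) * ((2 * e + 1 : ℕ) : ZMod q)) = ((t * (2 * e + 1) : ℕ) : ZMod q) by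
        push_cast; ring]
      rw [show t * (2 * e + 1) = q by rw [hq]; ring]
      exact ZMod.natCast_self q
    have h1 : (t • cM) 1 = ((t * s.val : ℕ) : ZMod q) := by
      rw [Pi.smul_apply, nsmul_eq_mul, ← hs]
      push_cast [ZMod.natCast_zmod_val]
      ring
    have hdvd := hD _ htC h0
    rw [h1, ZMod.val_natCast] at hdvd
    have hmod := Nat.mod_add_div (t * s.val) q
    have hqd : (2 * e + 1) ∣ q * (t * s.val / q) := Dvd.dvd.mul_right ⟨t, hq⟩ _
    have hsum := Nat.dvd_add hdvd hqd
    rwa [hmod] at hsum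
  have hd1pos : 0 < Nat.gcd (2 * e + 1) t := Nat.gcd_pos_of_pos_left _ (by omega)
  have hh1s : ((2 * e + 1) / Nat.gcd (2 * e + 1) t) ∣ s.val := by
    set d1 := Nat.gcd (2 * e + 1) t with hd1
    set hh1 := (2 * e + 1) / d1 with hhh1
    set t' := t / d1 with ht'
    have hm_eq : 2 * e + 1 = d1 * hh1 := (Nat.mul_div_cancel' (Nat.gcd_dvd_left _ _)).symm
    have ht_eq : t = d1 * t' := (Nat.mul_div_cancel' (Nat.gcd_dvd_right _ _)).symm
    have hco : Nat.Coprime hh1 t' := Nat.coprime_div_gcd_div_gcd hd1pos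
    have h2 : d1 * hh1 ∣ d1 * (t' * s.val) := by
      rw [← hm_eq, ← mul_assoc, ← ht_eq]
      exact hts
    have h3 : hh1 ∣ t' * s.val := (Nat.mul_dvd_mul_iff_left hd1pos).mp h2
    have h3' : hh1 ∣ s.val * t' := by rwa [mul_comm] at h3
    exact hco.dvd_of_dvd_mul_right h3'
  set k : ℕ := s.val / ((2 * e + 1) / Nat.gcd (2 * e + 1) t) with hk
  have hks : ((2 * e + 1) / Nat.gcd (2 * e + 1) t) * k = s.val := Nat.mul_div_cancel' hh1s
  refine ⟨(k : ℤ), ?_⟩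
  -- identify the generator
  have hKs : (((k : ℤ) * (((2 * e + 1) / Nat.gcd (2 * e + 1) t : ℕ) : ℤ) : ℤ) : ZMod q) = s := by
    have h' : (((2 * e + 1) / Nat.gcd (2 * e + 1) t * k : ℕ) : ℤ)
        = (k : ℤ) * (((2 * e + 1) / Nat.gcd (2 * e + 1) t : ℕ) : ℤ) := by
      rw [Nat.cast_mul]; ring
    rw [← h', Int.cast_natCast, hks, ZMod.natCast_zmod_val]
  have hg1 : ![M, (((k : ℤ) * (((2 * e + 1) / Nat.gcd (2 * e + 1) t : ℕ) : ℤ) : ℤ) : ZMod q)]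
      = cM := by
    funext i
    fin_cases i
    · exact hcM0.symm
    · simpa using hKs
  apply le_antisymm
  · -- C ≤ LCcode
    intro c hc
    have hdv0 := hC1 c hc
    set a : ℕ := (c 0).val / (2 * e + 1) with ha
    have hc0 : c 0 = (((2 * e + 1) * a : ℕ) : ZMod q) := by
      rw [← ZMod.natCast_zmod_val (c 0), ha, Nat.mul_div_cancel' hdv0]
    have hwC : c - a • cM ∈ C := sub_mem hc (AddSubgroup.nsmul_mem C hcM a)
    have hw0 : (c - a • cM) 0 = 0 := by
      rw [Pi.sub_apply, Pi.smul_apply, hcM0, nsmul_eq_mul, hc0, hM]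
      push_cast
      ring
    have hdv1 := hD _ hwC hw0
    set b : ℕ := ((c - a • cM) 1).val / (2 * e + 1) with hb
    have hw1 : (c - a • cM) 1 = (((2 * e + 1) * b : ℕ) : ZMod q) := by
      rw [← ZMod.natCast_zmod_val ((c - a • cM) 1), hb, Nat.mul_div_cancel' hdv1]
    have hcdec : c = a • cM + b • ![(0 : ZMod q), M] := by
      funext i
      fin_cases i
      · show c 0 = (a • cM + b • ![(0 : ZMod q), M]) 0
        rw [Pi.add_apply, Pi.smul_apply, Pi.smul_apply, hcM0, Matrix.cons_val_zero, smul_zero,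
          add_zero, nsmul_eq_mul, hc0, hM]
        push_cast
        ring
      · show c 1 = (a • cM + b • ![(0 : ZMod q), M]) 1
        have := hw1
        rw [Pi.sub_apply, Pi.smul_apply, sub_eq_iff_eq_add] at this
        rw [Pi.add_apply, Pi.smul_apply, Pi.smul_apply, Matrix.cons_val_one, Matrix.cons_val_zero,
          this, nsmul_eq_mul, nsmul_eq_mul, hM]
        push_cast
        ring
    rw [hcdec]
    have hcMLC : cM ∈ LCcode q e t (k : ℤ) := by
      rw [LCcode, ← hg1]
      exact AddSubgroup.subset_closure (Set.mem_insert _ _)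
    have hg2LC : ![(0 : ZMod q), M] ∈ LCcode q e t (k : ℤ) := by
      rw [LCcode, hM]
      exact AddSubgroup.subset_closure (Set.mem_insert_of_mem _ rfl)
    exact add_mem (AddSubgroup.nsmul_mem _ hcMLC a) (AddSubgroup.nsmul_mem _ hg2LC b)
  · -- LCcode ≤ C
    rw [LCcode]
    apply (AddSubgroup.closure_le C).mpr
    rintro z hz
    rcases hz with hz | hz
    · rw [hz, hg1]
      exact hcM
    · rw [Set.mem_singleton_iff] at hz
      rw [hz]
      exact hg2

/-- Generator description of two-dimensional linear perfect codes of type 2. -/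
theorem stmt5 (e t q : ℕ) (ht : 2 ≤ t) (hq : q = (2 * e + 1) * t) :
    (∀ k : ℤ, IsPerfectCode e (LCcode q e t k : Set (Fin 2 → ZMod q)) ∧
      IsTypeCode e (LCcode q e t k : Set (Fin 2 → ZMod q)) 1) ∧
    (∀ C : AddSubgroup (Fin 2 → ZMod q),
      IsPerfectCode e (C : Set (Fin 2 → ZMod q)) →
      IsTypeCode e (C : Set (Fin 2 → ZMod q)) 1 →
      ∃ k : ℤ, C = LCcode q e t k) := by
  haveI : NeZero q := ⟨by subst hq; positivity⟩
  exact ⟨fun k => part1 hq k, fun C hP hT => part2 ht hq C hP hT⟩
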